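/- For 0 < q < 1 and |z| < 1/(1-q), the q-exponential e_q(z) = ∑_{n=0}^∞ z^n/[n]_q! satisfies e_q(z) = 1/∏_{i=0}^∞ (1 - (1-q) q^i z). -/

import Mathlib

noncomputable def qFactorial (q : ℝ) (n : ℕ) : ℝ :=
  ∏ k ∈ Finset.range n, (1 - q ^ (k + 1)) / (1 - q)

/-- `e_q(z) = ∑ z^n / [n]_q!`. -/
noncomputable def qExp (q : ℝ) (z : ℝ) : ℝ :=
  ∑' n : ℕ, z ^ n / qFactorial q n

open Finset Filter Topology

section aux

variable {q : ℝ} (hq0 : 0 < q) (hq1 : q < 1)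

lemma qFac_zero : qFactorial q 0 = 1 := by simp [qFactorial]

lemma qFac_succ (n : ℕ) :
    qFactorial q (n + 1) = qFactorial q n * ((1 - q ^ (n + 1)) / (1 - q)) := by
  unfold qFactorial; exact Finset.prod_range_succ _ n

include hq0 hq1

lemma q_pow_lt_one (n : ℕ) : q ^ (n + 1) < 1 :=
  pow_lt_one₀ hq0.le hq1 (Nat.succ_ne_zero n)

lemma qFac_one_le (n : ℕ) : 1 ≤ qFactorial q n := by
  induction n with
  | zero => simp [qFac_zero]
  | succ n ih =>
    rw [qFac_succ]
    have h1 : (1 : ℝ) ≤ (1 - q ^ (n + 1)) / (1 - q) := by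
      rw [le_div_iff₀ (by linarith)]
      have : q ^ (n + 1) ≤ q := by
        calc q ^ (n + 1) ≤ q ^ 1 := pow_le_pow_of_le_one hq0.le hq1.le (by omega)
        _ = q := pow_one q
      linarith
    nlinarith

lemma qFac_pos (n : ℕ) : 0 < qFactorial q n :=
  lt_of_lt_of_le one_pos (qFac_one_le hq0 hq1 n)

lemma qExp_summable {w : ℝ} (hw : |w| < 1 / (1 - q)) :
    Summable (fun n : ℕ => w ^ n / qFactorial q n) := by
  have hq' : (0:ℝ) < 1 - q := by linarith
  have hwz : (1 - q) * |w| < 1 := by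
    rw [lt_div_iff₀ hq'] at hw; linarith [hw]
  set r : ℝ := ((1 - q) * |w| + 1) / 2 with hr
  have hr1 : r < 1 := by
    rw [hr]; linarith
  have hrgt : (1 - q) * |w| < r := by
    rw [hr]; nlinarith [abs_nonneg w]
  -- eventually the ratio is ≤ r
  have htend : Tendsto (fun n : ℕ => (1 - q) * |w| / (1 - q ^ (n + 1))) atTop
      (𝓝 ((1 - q) * |w|)) := by
    have h1 : Tendsto (fun n : ℕ => (1 : ℝ) - q ^ (n + 1)) atTop (𝓝 1) := by
      have := (tendsto_pow_atTop_nhds_zero_of_lt_one hq0.le hq1).comp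
        (tendsto_add_atTop_nat 1)
      simpa using (tendsto_const_nhds.sub this)
    have := (tendsto_const_nhds (x := (1 - q) * |w|)).div h1 (by norm_num)
    rw [div_one] at this; exact this
  have hev : ∀ᶠ n : ℕ in atTop, (1 - q) * |w| / (1 - q ^ (n + 1)) ≤ r :=
    (htend.eventually (eventually_le_nhds hrgt))
  apply summable_of_ratio_norm_eventually_le hr1
  filter_upwards [hev] with n hn
  have hFpos := qFac_pos hq0 hq1 n
  have hqp : (0:ℝ) < 1 - q ^ (n + 1) := by
    have := q_pow_lt_one hq0 hq1 n; linarith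
  have hnorm1 : ‖w ^ (n + 1) / qFactorial q (n + 1)‖
      = ((1 - q) * |w| / (1 - q ^ (n + 1))) * ‖w ^ n / qFactorial q n‖ := by
    rw [Real.norm_eq_abs, Real.norm_eq_abs, abs_div, abs_div, abs_pow, abs_pow,
      qFac_succ, abs_of_pos hFpos, abs_of_pos (by positivity : (0:ℝ) < qFactorial q n *
        ((1 - q ^ (n + 1)) / (1 - q)))]
    field_simp
    ring
  rw [hnorm1]
  have h2 : (0:ℝ) ≤ ‖w ^ n / qFactorial q n‖ := norm_nonneg _
  exact mul_le_mul_of_nonneg_right hn h2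

lemma one_le_inv_one_sub_q : (1:ℝ) ≤ 1 / (1 - q) := by
  rw [le_div_iff₀ (by linarith : (0:ℝ) < 1 - q)]; linarith

/-- The functional equation `(1-(1-q)w) e_q(w) = e_q(qw)`. -/
lemma qExp_funeq {w : ℝ} (hw : |w| < 1 / (1 - q)) :
    (1 - (1 - q) * w) * qExp q w = qExp q (q * w) := by
  have hq' : (0:ℝ) < 1 - q := by linarith
  set a : ℕ → ℝ := fun n => w ^ n / qFactorial q n with ha_def
  set b : ℕ → ℝ := fun n => (q * w) ^ n / qFactorial q n with hb_def
  have ha : Summable a := qExp_summable hq0 hq1 hw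
  have hqw : |q * w| < 1 / (1 - q) := by
    rw [abs_mul, abs_of_pos hq0]
    calc q * |w| ≤ 1 * |w| := by
          apply mul_le_mul_of_nonneg_right hq1.le (abs_nonneg w)
    _ = |w| := one_mul _
    _ < 1 / (1 - q) := hw
  have hb : Summable b := qExp_summable hq0 hq1 hqw
  have hd : Summable (fun n => a n - b n) := ha.sub hb
  -- key termwise identity
  have key : ∀ n : ℕ, a (n + 1) - b (n + 1) = (1 - q) * w * a n := by
    intro n
    have hFpos := qFac_pos hq0 hq1 n
    have hqp : (0:ℝ) < 1 - q ^ (n + 1) := by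
      have := q_pow_lt_one hq0 hq1 n; linarith
    simp only [ha_def, hb_def, qFac_succ, mul_pow]
    field_simp
    ring
  have h0 : a 0 - b 0 = 0 := by simp [ha_def, hb_def, qFac_zero]
  have hsplit : ∑' n, (a n - b n) = (1 - q) * w * ∑' n, a n := by
    rw [Summable.tsum_eq_zero_add hd, h0, zero_add]
    calc ∑' n, (a (n + 1) - b (n + 1)) = ∑' n, (1 - q) * w * a n := by
          exact tsum_congr key
    _ = (1 - q) * w * ∑' n, a n := by
          rw [← tsum_mul_left]
  have hsub : ∑' n, (a n - b n) = (∑' n, a n) - ∑' n, b n := Summable.tsum_sub ha hb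
  have : qExp q w - qExp q (q * w) = (1 - q) * w * qExp q w := by
    have e1 : qExp q w = ∑' n, a n := rfl
    have e2 : qExp q (q * w) = ∑' n, b n := rfl
    rw [e1, e2, ← hsub, hsplit]
  linarith [this]

/-- Iterated functional equation. -/
lemma qExp_prod {z : ℝ} (hz : |z| < 1 / (1 - q)) (n : ℕ) :
    (∏ i ∈ Finset.range n, (1 - (1 - q) * q ^ i * z)) * qExp q z
      = qExp q (q ^ n * z) := by
  induction n with
  | zero => simp
  | succ n ih =>
    have hwn : |q ^ n * z| < 1 / (1 - q) := by
      rw [abs_mul, abs_pow, abs_of_pos hq0]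
      calc q ^ n * |z| ≤ 1 * |z| := by
            apply mul_le_mul_of_nonneg_right (pow_le_one₀ hq0.le hq1.le) (abs_nonneg z)
      _ = |z| := one_mul _
      _ < 1 / (1 - q) := hz
    have hstep := qExp_funeq hq0 hq1 hwn
    rw [Finset.prod_range_succ]
    have : q ^ (n + 1) * z = q * (q ^ n * z) := by ring
    rw [this, ← hstep, ← ih]
    ring

/-- Near 0, `e_q` is close to 1. -/
lemma qExp_near_one {w : ℝ} (hw : |w| ≤ 1 / 2) : |qExp q w - 1| ≤ 2 * |w| := by
  have hw1 : |w| < 1 := lt_of_le_of_lt hw (by norm_num)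
  have hwd : |w| < 1 / (1 - q) :=
    lt_of_lt_of_le hw1 (one_le_inv_one_sub_q hq0 hq1)
  set a : ℕ → ℝ := fun n => w ^ n / qFactorial q n with ha_def
  have ha : Summable a := qExp_summable hq0 hq1 hwd
  have ha1 : Summable (fun n => a (n + 1)) := (summable_nat_add_iff 1).2 ha
  have hgeo : Summable (fun n : ℕ => |w| * |w| ^ n) :=
    (summable_geometric_of_lt_one (abs_nonneg w) hw1).mul_left _
  have hsplit : qExp q w = 1 + ∑' n, a (n + 1) := by
    have : qExp q w = ∑' n, a n := rfl
    rw [this, Summable.tsum_eq_zero_add ha]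
    simp [ha_def, qFac_zero]
  rw [hsplit]
  have hbound : ∀ n : ℕ, ‖a (n + 1)‖ ≤ |w| * |w| ^ n := by
    intro n
    have hF := qFac_one_le hq0 hq1 (n + 1)
    have hFpos := qFac_pos hq0 hq1 (n + 1)
    rw [Real.norm_eq_abs, ha_def]
    simp only
    rw [abs_div, abs_pow, abs_of_pos hFpos]
    calc |w| ^ (n + 1) / qFactorial q (n + 1) ≤ |w| ^ (n + 1) / 1 := by
          apply div_le_div_of_nonneg_left (by positivity) one_pos hF
    _ = |w| * |w| ^ n := by rw [div_one, pow_succ]; ring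
  have hnormsum : Summable (fun n => ‖a (n + 1)‖) := by
    simpa [Real.norm_eq_abs] using ha1.abs
  calc |1 + ∑' n, a (n + 1) - 1| = |∑' n, a (n + 1)| := by congr 1; ring
  _ ≤ ∑' n, ‖a (n + 1)‖ := by
        simpa [Real.norm_eq_abs] using norm_tsum_le_tsum_norm hnormsum
  _ ≤ ∑' n, |w| * |w| ^ n := Summable.tsum_le_tsum hbound hnormsum hgeo
  _ = |w| * (1 - |w|)⁻¹ := by
        rw [tsum_mul_left, tsum_geometric_of_lt_one (abs_nonneg w) hw1]
  _ ≤ |w| * 2 := by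
        apply mul_le_mul_of_nonneg_left _ (abs_nonneg w)
        rw [inv_le_comm₀ (by linarith) (by norm_num)]
        linarith
  _ = 2 * |w| := by ring

end aux

theorem qExp_eq_inv_tprod (q : ℝ) (hq0 : 0 < q) (hq1 : q < 1) (z : ℝ)
    (hz : |z| < 1 / (1 - q)) :
    qExp q z = (∏' i : ℕ, (1 - (1 - q) * q ^ i * z))⁻¹ := by
  have hq' : (0:ℝ) < 1 - q := by linarith
  set f : ℕ → ℝ := fun i => 1 - (1 - q) * q ^ i * z with hf_def
  have hzz : (1 - q) * |z| < 1 := by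
    rw [lt_div_iff₀ hq'] at hz; linarith
  set δ : ℝ := 1 - (1 - q) * |z| with hδ_def
  have hδ0 : 0 < δ := by linarith
  have hδ1 : δ ≤ 1 := by nlinarith [abs_nonneg z]
  -- bound on |f i - 1| and positivity
  have hfb : ∀ i : ℕ, |f i - 1| ≤ (1 - q) * |z| * q ^ i := by
    intro i
    have : f i - 1 = -((1 - q) * q ^ i * z) := by rw [hf_def]; ring
    rw [this, abs_neg, abs_mul, abs_mul, abs_of_pos hq', abs_of_pos (pow_pos hq0 i)]
    ring_nf
    exact le_refl _
  have hfδ : ∀ i : ℕ, δ ≤ f i := by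
    intro i
    have h1 := hfb i
    have h2 : (1 - q) * |z| * q ^ i ≤ (1 - q) * |z| * 1 := by
      apply mul_le_mul_of_nonneg_left (pow_le_one₀ hq0.le hq1.le)
      positivity
    have h3 : |f i - 1| ≤ (1 - q) * |z| := by linarith
    have := abs_le.1 h3
    rw [hδ_def]; linarith [this.1]
  have hfpos : ∀ i : ℕ, 0 < f i := fun i => lt_of_lt_of_le hδ0 (hfδ i)
  -- summability of logs
  have hlogb : ∀ i : ℕ, |Real.log (f i)| ≤ ((1 - q) * |z| / δ) * q ^ i := by
    intro i
    have hpos := hfpos i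
    have key : |Real.log (f i)| ≤ |f i - 1| / δ := by
      rcases le_or_gt 1 (f i) with h | h
      · have hl0 : 0 ≤ Real.log (f i) := Real.log_nonneg h
        rw [abs_of_nonneg hl0, abs_of_nonneg (by linarith)]
        calc Real.log (f i) ≤ f i - 1 := Real.log_le_sub_one_of_pos hpos
        _ ≤ (f i - 1) / δ := by
              rw [le_div_iff₀ hδ0]; nlinarith
      · have hl0 : Real.log (f i) ≤ 0 := Real.log_nonpos hpos.le h.le
        rw [abs_of_nonpos hl0, abs_of_neg (by linarith)]
        have hinv : -Real.log (f i) = Real.log (f i)⁻¹ := (Real.log_inv _).symm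
        rw [hinv]
        calc Real.log (f i)⁻¹ ≤ (f i)⁻¹ - 1 :=
              Real.log_le_sub_one_of_pos (by positivity)
        _ = (1 - f i) / f i := by field_simp
        _ ≤ (1 - f i) / δ := by
              apply div_le_div_of_nonneg_left (by linarith) hδ0 (hfδ i)
        _ = -(f i - 1) / δ := by ring
    calc |Real.log (f i)| ≤ |f i - 1| / δ := key
    _ ≤ ((1 - q) * |z| * q ^ i) / δ := by
          gcongr
          exact hfb i
    _ = ((1 - q) * |z| / δ) * q ^ i := by ring
  have hgeo : Summable (fun i : ℕ => ((1 - q) * |z| / δ) * q ^ i) :=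
    (summable_geometric_of_lt_one hq0.le hq1).mul_left _
  have hlogabs : Summable (fun i => |Real.log (f i)|) :=
    Summable.of_nonneg_of_le (fun i => abs_nonneg _) hlogb hgeo
  have hlog : Summable (fun i => Real.log (f i)) := hlogabs.of_abs
  -- multipliability
  have hprod : HasProd f (Real.exp (∑' i, Real.log (f i))) := by
    have h := hlog.hasSum.rexp
    have hfun : (Real.exp ∘ fun i => Real.log (f i)) = f :=
      funext fun i => Real.exp_log (hfpos i)
    rwa [hfun] at h
  have hmult : Multipliable f := ⟨_, hprod⟩
  have htendP : Tendsto (fun n => ∏ i ∈ Finset.range n, f i) atTop (𝓝 (∏' i, f i)) :=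
    hmult.hasProd.tendsto_prod_nat
  -- the sequence e_q(qⁿ z) tends to 1
  have htend0 : Tendsto (fun n : ℕ => q ^ n * z) atTop (𝓝 0) := by
    have := (tendsto_pow_atTop_nhds_zero_of_lt_one hq0.le hq1).mul_const z
    simpa using this
  have hev : ∀ᶠ n : ℕ in atTop, |q ^ n * z| ≤ 1 / 2 := by
    have : ∀ᶠ x : ℝ in 𝓝 (0:ℝ), |x| ≤ 1 / 2 := by
      have : Metric.closedBall (0:ℝ) (1/2) ∈ 𝓝 (0:ℝ) :=
        Metric.closedBall_mem_nhds 0 (by norm_num)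
      filter_upwards [this] with x hx
      simpa [Real.dist_eq] using hx
    exact htend0.eventually this
  have htend1 : Tendsto (fun n : ℕ => qExp q (q ^ n * z)) atTop (𝓝 1) := by
    rw [tendsto_iff_dist_tendsto_zero]
    apply squeeze_zero' (f := fun n => dist (qExp q (q ^ n * z)) 1)
      (g := fun n => 2 * |q ^ n * z|)
    · filter_upwards with n; exact dist_nonneg
    · filter_upwards [hev] with n hn
      rw [Real.dist_eq]
      exact qExp_near_one hq0 hq1 hn
    · have := htend0.abs.const_mul (2:ℝ)
      simpa using this
  -- combine
  have hcomb : Tendsto (fun n => (∏ i ∈ Finset.range n, f i) * qExp q z) atTop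
      (𝓝 ((∏' i, f i) * qExp q z)) := htendP.mul_const _
  have heq : (fun n => (∏ i ∈ Finset.range n, f i) * qExp q z)
      = fun n => qExp q (q ^ n * z) := by
    funext n
    exact qExp_prod hq0 hq1 hz n
  rw [heq] at hcomb
  have hone : (∏' i, f i) * qExp q z = 1 := tendsto_nhds_unique hcomb htend1
  exact eq_inv_of_mul_eq_one_left (by rw [mul_comm] at hone; exact hone)
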